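/- For H = (px²+py²+pz²)/2 + k1/r + k2/x² + k3/y² + k4/z² (r = √(x²+y²+z²)), the function R_x = (J2·pz − J3·py) − x·(k1/r + 2k2/x² + 2k3/y² + 2k4/z²), where J2 = z·px − x·pz and J3 = x·py − y·px, satisfies {R_x, H} = (2k2/x³)·(x·px + y·py + z·pz), and the function D_x = (x·px + y·py + z·pz)/x satisfies {D_x, H} = −(1/x²)·R_x. -/

import Mathlib

set_option maxHeartbeats 1000000


noncomputable section

/-- Phase space ℝ⁶ with coordinates (x,y,z,px,py,pz). -/
abbrev Pt := Fin 6 → ℝ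

/-- Standard basis vector. -/
def e (j : Fin 6) : Pt := Pi.single j 1

/-- Canonical Poisson bracket on ℝ⁶:
{F,G} = Σᵢ (∂F/∂qᵢ ∂G/∂pᵢ − ∂F/∂pᵢ ∂G/∂qᵢ). -/
def pb (F G : Pt → ℝ) (q : Pt) : ℝ :=
    (fderiv ℝ F q (e 0)) * (fderiv ℝ G q (e 3)) - (fderiv ℝ F q (e 3)) * (fderiv ℝ G q (e 0))
  + (fderiv ℝ F q (e 1)) * (fderiv ℝ G q (e 4)) - (fderiv ℝ F q (e 4)) * (fderiv ℝ G q (e 1))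
  + (fderiv ℝ F q (e 2)) * (fderiv ℝ G q (e 5)) - (fderiv ℝ F q (e 5)) * (fderiv ℝ G q (e 2))

/-- H = (px²+py²+pz²)/2 + k1/r + k2/x² + k3/y² + k4/z², r = √(x²+y²+z²). -/
def Ham (k1 k2 k3 k4 : ℝ) (q : Pt) : ℝ :=
  (q 3 ^ 2 + q 4 ^ 2 + q 5 ^ 2) / 2 + k1 / Real.sqrt (q 0 ^ 2 + q 1 ^ 2 + q 2 ^ 2)
    + k2 / q 0 ^ 2 + k3 / q 1 ^ 2 + k4 / q 2 ^ 2

/-- R_x = (J2 pz − J3 py) − x·(k1/r + 2k2/x² + 2k3/y² + 2k4/z²),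
with J2 = z px − x pz, J3 = x py − y px. -/
def Rx (k1 k2 k3 k4 : ℝ) (q : Pt) : ℝ :=
  ((q 2 * q 3 - q 0 * q 5) * q 5 - (q 0 * q 4 - q 1 * q 3) * q 4)
    - q 0 * (k1 / Real.sqrt (q 0 ^ 2 + q 1 ^ 2 + q 2 ^ 2)
        + 2 * k2 / q 0 ^ 2 + 2 * k3 / q 1 ^ 2 + 2 * k4 / q 2 ^ 2)

theorem stmt15 (k1 k2 k3 k4 : ℝ) :
    ∀ q : Pt, q 0 ≠ 0 → q 1 ≠ 0 → q 2 ≠ 0 →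
      pb (Rx k1 k2 k3 k4) (Ham k1 k2 k3 k4) q
          = (2 * k2 / q 0 ^ 3) * (q 0 * q 3 + q 1 * q 4 + q 2 * q 5) ∧
      pb (fun p => (p 0 * p 3 + p 1 * p 4 + p 2 * p 5) / p 0) (Ham k1 k2 k3 k4) q
          = -(1 / q 0 ^ 2) * Rx k1 k2 k3 k4 q := by
  intro q hx hy hz
  have hs0 : (0:ℝ) < q 0 ^ 2 + q 1 ^ 2 + q 2 ^ 2 := by positivity
  have ht : Real.sqrt (q 0 ^ 2 + q 1 ^ 2 + q 2 ^ 2) ≠ 0 := (Real.sqrt_pos.mpr hs0).ne'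
  have hc : ∀ i : Fin 6, HasFDerivAt (fun p : Pt => p i)
      (ContinuousLinearMap.proj i : Pt →L[ℝ] ℝ) q :=
    fun i => hasFDerivAt_apply i q
  have sq : ∀ i : Fin 6, HasFDerivAt (fun p : Pt => p i ^ 2)
      ((2 * q i) • (ContinuousLinearMap.proj i : Pt →L[ℝ] ℝ)) q := by
    intro i
    have h1 : HasDerivAt (fun v : ℝ => v ^ 2) (2 * q i) (q i) := by
      simpa using hasDerivAt_pow 2 (q i)
    exact h1.comp_hasFDerivAt q (hc i)
  have hdivsq : ∀ (c : ℝ) (i : Fin 6), q i ≠ 0 → HasFDerivAt (fun p : Pt => c / p i ^ 2)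
      ((-2 * c / q i ^ 3) • (ContinuousLinearMap.proj i : Pt →L[ℝ] ℝ)) q := by
    intro c i hi
    have h1 : HasDerivAt (fun v : ℝ => c / v ^ 2) (-2 * c / q i ^ 3) (q i) := by
      have := (hasDerivAt_const (q i) c).div ((hasDerivAt_id' (q i)).pow 2) (pow_ne_zero 2 hi)
      refine this.congr_deriv ?_
      simp only [Pi.pow_apply]
      field_simp
      ring
    have := h1.comp_hasFDerivAt q (hc i); exact this
  -- derivative of the sum of squares s(p) = p0² + p1² + p2²
  have hS := ((sq 0).add (sq 1)).add (sq 2)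
  -- kinetic term
  have hkin := (HasDerivAt.div_const
      (hasDerivAt_id' ((q 3 ^ 2 + q 4 ^ 2 + q 5 ^ 2))) 2).comp_hasFDerivAt q
    (((sq 3).add (sq 4)).add (sq 5))
  -- c / sqrt(s p) terms
  have hksqrt : ∀ c : ℝ, HasFDerivAt (fun p : Pt => c / Real.sqrt (p 0 ^ 2 + p 1 ^ 2 + p 2 ^ 2))
      ((-c / (2 * Real.sqrt (q 0 ^ 2 + q 1 ^ 2 + q 2 ^ 2) * (q 0 ^ 2 + q 1 ^ 2 + q 2 ^ 2))) •
        ((2 * q 0) • (ContinuousLinearMap.proj 0 : Pt →L[ℝ] ℝ)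
          + (2 * q 1) • (ContinuousLinearMap.proj 1 : Pt →L[ℝ] ℝ)
          + (2 * q 2) • (ContinuousLinearMap.proj 2 : Pt →L[ℝ] ℝ))) q := by
    intro c
    have h1d : HasDerivAt (fun v : ℝ => c / Real.sqrt v)
        (-c / (2 * Real.sqrt (q 0 ^ 2 + q 1 ^ 2 + q 2 ^ 2) * (q 0 ^ 2 + q 1 ^ 2 + q 2 ^ 2)))
        (q 0 ^ 2 + q 1 ^ 2 + q 2 ^ 2) := by
      have := (hasDerivAt_const (q 0 ^ 2 + q 1 ^ 2 + q 2 ^ 2) c).div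
        (Real.hasDerivAt_sqrt hs0.ne') ht
      refine this.congr_deriv ?_
      rw [Real.sq_sqrt hs0.le]
      field_simp
      ring
    have := h1d.comp_hasFDerivAt q hS; exact this
  -- Hamiltonian
  have hH : HasFDerivAt (Ham k1 k2 k3 k4) _ q :=
    (((hkin.add (hksqrt k1)).add (hdivsq k2 0 hx)).add (hdivsq k3 1 hy)).add (hdivsq k4 2 hz)
  -- Rx
  have hU := (((hksqrt k1).add (hdivsq (2 * k2) 0 hx)).add (hdivsq (2 * k3) 1 hy)).add
    (hdivsq (2 * k4) 2 hz)
  have hR : HasFDerivAt (Rx k1 k2 k3 k4) _ q :=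
    (((((hc 2).mul (hc 3)).sub ((hc 0).mul (hc 5))).mul (hc 5)).sub
      ((((hc 0).mul (hc 4)).sub ((hc 1).mul (hc 3))).mul (hc 4))).sub ((hc 0).mul hU)
  -- Dx
  have hInv := (hasDerivAt_inv hx).comp_hasFDerivAt q (hc 0)
  have hN := (((hc 0).mul (hc 3)).add ((hc 1).mul (hc 4))).add ((hc 2).mul (hc 5))
  have hD : HasFDerivAt (fun p : Pt => (p 0 * p 3 + p 1 * p 4 + p 2 * p 5) / p 0) _ q :=
    (hN.mul hInv).congr_of_eventuallyEq
      (Filter.Eventually.of_forall fun p => div_eq_mul_inv _ _)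
  constructor
  · simp only [pb, hR.fderiv, hH.fderiv]
    simp [e, Pi.single_apply, ContinuousLinearMap.add_apply, ContinuousLinearMap.smul_apply,
      ContinuousLinearMap.sub_apply, ContinuousLinearMap.proj_apply]
    field_simp
    ring
  · simp only [pb, hD.fderiv, hH.fderiv]
    simp [e, Pi.single_apply, ContinuousLinearMap.add_apply, ContinuousLinearMap.smul_apply,
      ContinuousLinearMap.sub_apply, ContinuousLinearMap.proj_apply, Rx]
    field_simp
    ring
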